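/- arXiv:cs/0005030 — 2 statements merged into one kernel-verified Lean document; each statement's English description precedes it below -/
import Mathlib

section
/- Theorem (soundness and completeness for T_rec): for every signature S, the axiom system AX_rec(S) is sound and complete for the language L_uniq(S) with respect to the class T_rec(S) of recursive causal models; that is, a formula of L_uniq(S) is provable in AX_rec(S) if and only if it is true in every recursive causal model over S. -/
/-- A signature `S = (U, V, R)`: finite (disjoint) sets of exogenous variables `U` and
endogenous variables `V`, together with a nonempty finite set (here: type) of possible
values for each variable. -/
structure Signature where
  U : Type
  V : Type
  uFin : Fintype U
  vFin : Fintype V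
  vDecEq : DecidableEq V
  valU : U → Type
  valV : V → Type
  valUFin : ∀ u, Fintype (valU u)
  valVFin : ∀ X, Fintype (valV X)
  valUNonempty : ∀ u, Nonempty (valU u)
  valVNonempty : ∀ X, Nonempty (valV X)

attribute [instance] Signature.uFin Signature.vFin Signature.vDecEq
  Signature.valUFin Signature.valVFin Signature.valUNonempty Signature.valVNonempty

/-- The standing assumption `|R(Y)| ≥ 2` for every variable `Y`. -/
def Signature.Standard (S : Signature) : Prop :=
  (∀ u, 2 ≤ Fintype.card (S.valU u)) ∧ (∀ X, 2 ≤ Fintype.card (S.valV X))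

/-- A setting `u⃗` of values for all the exogenous variables. -/
abbrev Signature.Context (S : Signature) : Type := ∀ u : S.U, S.valU u

/-- An assignment of values to all the endogenous variables. -/
abbrev Signature.Assignment (S : Signature) : Type := ∀ X : S.V, S.valV X

/-- An intervention `X⃗ ← x⃗`: a vector of distinct endogenous variables together with
values for them, encoded as a partial assignment. -/
abbrev Signature.Intervention (S : Signature) : Type := ∀ X : S.V, Option (S.valV X)

/-- The empty intervention (`[true]`). -/
def Signature.emptyInt (S : Signature) : S.Intervention := fun _ => none

/-- Extend an intervention by additionally setting `W` to `w`. -/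
def intUpdate {S : Signature} (g : S.Intervention) (W : S.V) (w : S.valV W) :
    S.Intervention :=
  fun X => if h : X = W then some (cast (congrArg S.valV h).symm w) else g X

/-- A causal model `T = (S, F)` over the signature `S`. -/
structure CausalModel (S : Signature) where
  F : ∀ X : S.V, S.Context → (∀ Y : S.V, Y ≠ X → S.valV Y) → S.valV X

/-- `v` is a solution of `T_{X⃗ ← x⃗}(u⃗)` (intervention encoded by `g`): intervened
variables take their set values, and every other variable satisfies its equation. -/
def CausalModel.IsSolution {S : Signature} (T : CausalModel S) (g : S.Intervention)
    (u : S.Context) (v : S.Assignment) : Prop :=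
  ∀ X : S.V,
    (∀ x, g X = some x → v X = x) ∧
    (g X = none → v X = T.F X u fun Y _ => v Y)

/-- `T ∈ T_uniq(S)`: the equations of `T_{X⃗ ← x⃗}(u⃗)` have a unique solution, for every
intervention and every context. -/
def CausalModel.UniqueSolutions {S : Signature} (T : CausalModel S) : Prop :=
  ∀ (g : S.Intervention) (u : S.Context), ∃! v : S.Assignment, T.IsSolution g u v

/-- `T ∈ T_rec(S)`: there is a (strict) total order `≺` on `V` such that `F_X` is
independent of the value of `Y` whenever `X ≺ Y`. -/
def CausalModel.Recursive {S : Signature} (T : CausalModel S) : Prop :=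
  ∃ r : S.V → S.V → Prop, IsStrictTotalOrder S.V r ∧
    ∀ (X : S.V) (u : S.Context) (w w' : ∀ Y : S.V, Y ≠ X → S.valV Y),
      (∀ (Y : S.V) (h : Y ≠ X), ¬ r X Y → w Y h = w' Y h) →
      T.F X u w = T.F X u w'

/-- Boolean combinations of atoms of the form `X(u⃗) = x`. -/
inductive IForm (S : Signature) : Type where
  | atom : (X : S.V) → S.Context → S.valV X → IForm S
  | not : IForm S → IForm S
  | and : IForm S → IForm S → IForm S
  | or : IForm S → IForm S → IForm S

namespace IForm

variable {S : Signature}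

/-- The settings `u⃗` of the exogenous variables mentioned in a formula. -/
def mentions : IForm S → Set S.Context
  | atom _ u _ => {u}
  | not φ => φ.mentions
  | and φ ψ => φ.mentions ∪ ψ.mentions
  | or φ ψ => φ.mentions ∪ ψ.mentions

/-- The endogenous variables appearing in a formula. -/
def vars : IForm S → Set S.V
  | atom X _ _ => {X}
  | not φ => φ.vars
  | and φ ψ => φ.vars ∪ ψ.vars
  | or φ ψ => φ.vars ∪ ψ.vars

/-- Evaluate a Boolean combination of atoms, where the atoms mentioning `u⃗` are
evaluated in the assignment `σ u⃗`. -/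
def eval (σ : S.Context → S.Assignment) : IForm S → Prop
  | atom X u x => σ u X = x
  | not φ => ¬ φ.eval σ
  | and φ ψ => φ.eval σ ∧ ψ.eval σ
  | or φ ψ => φ.eval σ ∨ ψ.eval σ

def imp (φ ψ : IForm S) : IForm S := or (not φ) ψ

/-- `φ ∧ ψ₁ ∧ … ∧ ψₙ`. -/
def conj (φ : IForm S) : List (IForm S) → IForm S
  | [] => φ
  | ψ :: l => and φ (conj ψ l)

/-- `φ ∨ ψ₁ ∨ … ∨ ψₙ`. -/
def disj (φ : IForm S) : List (IForm S) → IForm S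
  | [] => φ
  | ψ :: l => or φ (disj ψ l)

/-- Evaluation under an arbitrary truth assignment to the atoms. -/
def pEval (val : ∀ X : S.V, S.Context → S.valV X → Prop) : IForm S → Prop
  | atom X u x => val X u x
  | not φ => ¬ φ.pEval val
  | and φ ψ => φ.pEval val ∧ ψ.pEval val
  | or φ ψ => φ.pEval val ∨ ψ.pEval val

/-- An instance of a propositional tautology. -/
def Tautology (φ : IForm S) : Prop := ∀ val, φ.pEval val

theorem mentions_nonempty : ∀ φ : IForm S, φ.mentions.Nonempty
  | atom _ u _ => ⟨u, rfl⟩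
  | not φ => mentions_nonempty φ
  | and φ _ => (mentions_nonempty φ).imp fun _ h => Set.mem_union_left _ h
  | or φ _ => (mentions_nonempty φ).imp fun _ h => Set.mem_union_left _ h

end IForm

/-- `T ⊨ [X⃗ ← x⃗] φ` : for every choice, for each mentioned setting `u⃗`, of a solution
of `T_{X⃗ ← x⃗}(u⃗)`, the formula `φ` evaluates to true. -/
def CausalModel.boxSat {S : Signature} (T : CausalModel S) (g : S.Intervention)
    (φ : IForm S) : Prop :=
  ∀ σ : S.Context → S.Assignment,
    (∀ u ∈ φ.mentions, T.IsSolution g u (σ u)) → φ.eval σ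

/-- The language `L⁺(S)`: Boolean combinations of basic causal formulas `[Y⃗ ← y⃗] φ`. -/
inductive LPlus (S : Signature) : Type where
  | box : S.Intervention → IForm S → LPlus S
  | not : LPlus S → LPlus S
  | and : LPlus S → LPlus S → LPlus S
  | or : LPlus S → LPlus S → LPlus S

namespace LPlus

variable {S : Signature}

/-- Truth of a causal formula in a causal model. -/
def sat : LPlus S → CausalModel S → Prop
  | box g φ, T => T.boxSat g φ
  | not φ, T => ¬ φ.sat T
  | and φ ψ, T => φ.sat T ∧ ψ.sat T
  | or φ ψ, T => φ.sat T ∨ ψ.sat T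

/-- `⟨X⃗ ← x⃗⟩ φ` abbreviates `¬ [X⃗ ← x⃗] ¬ φ`. -/
def dia (g : S.Intervention) (φ : IForm S) : LPlus S := not (box g (IForm.not φ))

def imp (φ ψ : LPlus S) : LPlus S := or (not φ) ψ

def iff (φ ψ : LPlus S) : LPlus S := and (imp φ ψ) (imp ψ φ)

def conj (φ : LPlus S) : List (LPlus S) → LPlus S
  | [] => φ
  | ψ :: l => and φ (conj ψ l)

def disj (φ : LPlus S) : List (LPlus S) → LPlus S
  | [] => φ
  | ψ :: l => or φ (disj ψ l)

/-- Membership in the sublanguage `L_uniq(S)`: Boolean combinations of formulas of the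
form `[Y⃗ ← y⃗](X(u⃗) = x)`. -/
def InLuniq : LPlus S → Prop
  | box _ φ => ∃ (X : S.V) (u : S.Context) (x : S.valV X), φ = IForm.atom X u x
  | not φ => φ.InLuniq
  | and φ ψ => φ.InLuniq ∧ ψ.InLuniq
  | or φ ψ => φ.InLuniq ∧ ψ.InLuniq

/-- Evaluation under an arbitrary truth assignment to the basic causal formulas. -/
def pEval (val : S.Intervention → IForm S → Prop) : LPlus S → Prop
  | box g φ => val g φ
  | not φ => ¬ φ.pEval val
  | and φ ψ => φ.pEval val ∧ ψ.pEval val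
  | or φ ψ => φ.pEval val ∨ ψ.pEval val

/-- An instance of a propositional tautology. -/
def Tautology (φ : LPlus S) : Prop := ∀ val, φ.pEval val

/-- The endogenous variables appearing in a causal formula (including the variables
set by its interventions). -/
def vars : LPlus S → Set S.V
  | box g φ => {X | g X ≠ none} ∪ φ.vars
  | not φ => φ.vars
  | and φ ψ => φ.vars ∪ ψ.vars
  | or φ ψ => φ.vars ∪ ψ.vars

/-- The settings of the exogenous variables mentioned in a causal formula. -/
def contexts : LPlus S → Set S.Context
  | box _ φ => φ.mentions
  | not φ => φ.contexts
  | and φ ψ => φ.contexts ∪ ψ.contexts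
  | or φ ψ => φ.contexts ∪ ψ.contexts

theorem contexts_nonempty : ∀ φ : LPlus S, φ.contexts.Nonempty
  | box _ φ => φ.mentions_nonempty
  | not φ => contexts_nonempty φ
  | and φ _ => (contexts_nonempty φ).imp fun _ h => Set.mem_union_left _ h
  | or φ _ => (contexts_nonempty φ).imp fun _ h => Set.mem_union_left _ h

end LPlus

/-- `Y` affects `Z` in `T`: for some setting of the exogenous variables and of some
other endogenous variables, changing the value of `Y` changes the value of `Z`. -/
def CausalModel.Affects {S : Signature} (T : CausalModel S) (Y Z : S.V) : Prop :=
  Y ≠ Z ∧ ∃ (g : S.Intervention) (y : S.valV Y) (u : S.Context) (z z' : S.valV Z),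
    g Y = none ∧ g Z = none ∧ z ≠ z' ∧
    T.boxSat (intUpdate g Y y) (IForm.atom Z u z') ∧ T.boxSat g (IForm.atom Z u z)

/-- Provability from a set of axioms using modus ponens. -/
inductive Provable {S : Signature} (Ax : Set (LPlus S)) : LPlus S → Prop
  | ax : ∀ {φ}, φ ∈ Ax → Provable Ax φ
  | mp : ∀ {φ ψ}, Provable Ax (φ.imp ψ) → Provable Ax φ → Provable Ax ψ

/-! ### The axiom system `AX_uniq(S)` / `AX_rec(S)` for the language `L_uniq(S)` -/

/-- C0: all instances of propositional tautologies (in the language `L_uniq(S)`). -/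
def C0Ax (S : Signature) : Set (LPlus S) := {φ | φ.Tautology ∧ φ.InLuniq}

/-- C1 (equality): `X_{y⃗}(u⃗) = x ⇒ ¬(X_{y⃗}(u⃗) = x')` for distinct `x, x'`. -/
def C1Ax (S : Signature) : Set (LPlus S) :=
  {φ | ∃ (g : S.Intervention) (X : S.V) (u : S.Context) (x x' : S.valV X),
    x ≠ x' ∧
    φ = (LPlus.box g (IForm.atom X u x)).imp (LPlus.not (LPlus.box g (IForm.atom X u x')))}

/-- C2 (definiteness): `∨_{x ∈ R(X)} X_{y⃗}(u⃗) = x`. -/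
def C2Ax (S : Signature) : Set (LPlus S) :=
  {φ | ∃ (g : S.Intervention) (X : S.V) (u : S.Context) (x : S.valV X) (l : List (S.valV X)),
    (x :: l).Nodup ∧ (∀ y : S.valV X, y ∈ x :: l) ∧
    φ = (LPlus.box g (IForm.atom X u x)).disj (l.map fun y => LPlus.box g (IForm.atom X u y))}

/-- C3 (composition): `(W_{x⃗}(u⃗) = w ∧ Y_{x⃗}(u⃗) = y) ⇒ Y_{x⃗w}(u⃗) = y`. -/
def C3Ax (S : Signature) : Set (LPlus S) :=
  {φ | ∃ (g : S.Intervention) (W Y : S.V) (u : S.Context) (w : S.valV W) (y : S.valV Y),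
    g W = none ∧ g Y = none ∧ W ≠ Y ∧
    φ = (LPlus.and (LPlus.box g (IForm.atom W u w)) (LPlus.box g (IForm.atom Y u y))).imp
          (LPlus.box (intUpdate g W w) (IForm.atom Y u y))}

/-- C4 (effectiveness): `X_{x w⃗}(u⃗) = x` where `X` is one of the set variables. -/
def C4Ax (S : Signature) : Set (LPlus S) :=
  {φ | ∃ (g : S.Intervention) (X : S.V) (u : S.Context) (x : S.valV X),
    g X = some x ∧ φ = LPlus.box g (IForm.atom X u x)}

/-- C5 (reversibility): `(Y_{x⃗w}(u⃗) = y ∧ W_{x⃗y}(u⃗) = w) ⇒ Y_{x⃗}(u⃗) = y`. -/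
def C5Ax (S : Signature) : Set (LPlus S) :=
  {φ | ∃ (g : S.Intervention) (W Y : S.V) (u : S.Context) (w : S.valV W) (y : S.valV Y),
    g W = none ∧ g Y = none ∧ W ≠ Y ∧
    φ = (LPlus.and (LPlus.box (intUpdate g W w) (IForm.atom Y u y))
                   (LPlus.box (intUpdate g Y y) (IForm.atom W u w))).imp
          (LPlus.box g (IForm.atom Y u y))}

/-- A single disjunct `Z_{x⃗y}(u⃗) = z' ∧ Z_{x⃗}(u⃗) = z` (with `z ≠ z'`) of the
formula `Y ⤳ Z`. -/
def AffDisjunct (S : Signature) (Y Z : S.V) (φ : LPlus S) : Prop :=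
  ∃ (g : S.Intervention) (y : S.valV Y) (u : S.Context) (z z' : S.valV Z),
    g Y = none ∧ g Z = none ∧ z ≠ z' ∧
    φ = LPlus.and (LPlus.box (intUpdate g Y y) (IForm.atom Z u z'))
                  (LPlus.box g (IForm.atom Z u z))

/-- `φ` is the formula `Y ⤳ Z` (`Y` affects `Z`): the disjunction, over all settings of
the exogenous variables and of other endogenous variables, of all the disjuncts
`Z_{x⃗y}(u⃗) = z' ∧ Z_{x⃗}(u⃗) = z` with `z ≠ z'`. -/
def IsAffectsFormula (S : Signature) (Y Z : S.V) (φ : LPlus S) : Prop :=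
  Y ≠ Z ∧ ∃ (ψ : LPlus S) (l : List (LPlus S)), (ψ :: l).Nodup ∧
    (∀ χ : LPlus S, χ ∈ ψ :: l ↔ AffDisjunct S Y Z χ) ∧ φ = ψ.disj l

/-- C6 (recursiveness): `(X_0 ⤳ X_1 ∧ … ∧ X_{k-1} ⤳ X_k) ⇒ ¬(X_k ⤳ X_0)`. -/
def C6Ax (S : Signature) : Set (LPlus S) :=
  {φ | ∃ (k : ℕ) (Xs : Fin (k + 2) → S.V) (A : Fin (k + 1) → LPlus S) (B : LPlus S),
    (∀ i : Fin (k + 1), IsAffectsFormula S (Xs i.castSucc) (Xs i.succ) (A i)) ∧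
    IsAffectsFormula S (Xs (Fin.last (k + 1))) (Xs 0) B ∧
    φ = ((A 0).conj (List.ofFn A).tail).imp (LPlus.not B)}

/-- The axiom system `AX_uniq(S)`: C0–C5 (with modus ponens as inference rule). -/
def AXuniq (S : Signature) : Set (LPlus S) :=
  C0Ax S ∪ C1Ax S ∪ C2Ax S ∪ C3Ax S ∪ C4Ax S ∪ C5Ax S

/-- The axiom system `AX_rec(S)`: C0–C4 and C6 (with modus ponens). -/
def AXrec (S : Signature) : Set (LPlus S) :=
  C0Ax S ∪ C1Ax S ∪ C2Ax S ∪ C3Ax S ∪ C4Ax S ∪ C6Ax S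


/-! ### Auxiliary development -/

section Aux

variable {S : Signature}

namespace LPlus

theorem inLuniq_not {φ : LPlus S} (h : φ.InLuniq) : (LPlus.not φ).InLuniq := h
theorem inLuniq_imp {φ ψ : LPlus S} (h : φ.InLuniq) (h' : ψ.InLuniq) :
    (φ.imp ψ).InLuniq := ⟨h, h'⟩
theorem inLuniq_of_imp {φ ψ : LPlus S} (h : (φ.imp ψ).InLuniq) :
    φ.InLuniq ∧ ψ.InLuniq := h

theorem pEval_imp (val : S.Intervention → IForm S → Prop) (φ ψ : LPlus S) :
    (φ.imp ψ).pEval val ↔ (φ.pEval val → ψ.pEval val) := by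
  simp [LPlus.imp, LPlus.pEval]; tauto

theorem pEval_disj (val : S.Intervention → IForm S → Prop) (φ : LPlus S) :
    ∀ l : List (LPlus S),
      (φ.disj l).pEval val ↔ (φ.pEval val ∨ ∃ χ ∈ l, χ.pEval val)
  | [] => by simp [LPlus.disj]
  | ψ :: l => by
      simp only [LPlus.disj, LPlus.pEval, pEval_disj val ψ l, List.mem_cons]
      constructor
      · rintro (h | h | ⟨χ, hχ, h⟩)
        · exact Or.inl h
        · exact Or.inr ⟨ψ, Or.inl rfl, h⟩
        · exact Or.inr ⟨χ, Or.inr hχ, h⟩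
      · rintro (h | ⟨χ, (rfl | hχ), h⟩)
        · exact Or.inl h
        · exact Or.inr (Or.inl h)
        · exact Or.inr (Or.inr ⟨χ, hχ, h⟩)

theorem pEval_conj (val : S.Intervention → IForm S → Prop) (φ : LPlus S) :
    ∀ l : List (LPlus S),
      (φ.conj l).pEval val ↔ (φ.pEval val ∧ ∀ χ ∈ l, χ.pEval val)
  | [] => by simp [LPlus.conj]
  | ψ :: l => by
      simp only [LPlus.conj, LPlus.pEval, pEval_conj val ψ l, List.mem_cons]
      constructor
      · rintro ⟨h, h', h''⟩
        exact ⟨h, fun χ hχ => hχ.elim (fun e => e ▸ h') (h'' χ)⟩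
      · rintro ⟨h, h'⟩
        exact ⟨h, h' ψ (Or.inl rfl), fun χ hχ => h' χ (Or.inr hχ)⟩

theorem sat_disj (T : CausalModel S) (φ : LPlus S) :
    ∀ l : List (LPlus S),
      (φ.disj l).sat T ↔ (φ.sat T ∨ ∃ χ ∈ l, χ.sat T)
  | [] => by simp [LPlus.disj]
  | ψ :: l => by
      simp only [LPlus.disj, LPlus.sat, sat_disj T ψ l, List.mem_cons]
      constructor
      · rintro (h | h | ⟨χ, hχ, h⟩)
        · exact Or.inl h
        · exact Or.inr ⟨ψ, Or.inl rfl, h⟩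
        · exact Or.inr ⟨χ, Or.inr hχ, h⟩
      · rintro (h | ⟨χ, (rfl | hχ), h⟩)
        · exact Or.inl h
        · exact Or.inr (Or.inl h)
        · exact Or.inr (Or.inr ⟨χ, hχ, h⟩)

theorem sat_conj (T : CausalModel S) (φ : LPlus S) :
    ∀ l : List (LPlus S),
      (φ.conj l).sat T ↔ (φ.sat T ∧ ∀ χ ∈ l, χ.sat T)
  | [] => by simp [LPlus.conj]
  | ψ :: l => by
      simp only [LPlus.conj, LPlus.sat, sat_conj T ψ l, List.mem_cons]
      constructor
      · rintro ⟨h, h', h''⟩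
        exact ⟨h, fun χ hχ => hχ.elim (fun e => e ▸ h') (h'' χ)⟩
      · rintro ⟨h, h'⟩
        exact ⟨h, h' ψ (Or.inl rfl), fun χ hχ => h' χ (Or.inr hχ)⟩

/-- Truth in a model is evaluation under the valuation `T.boxSat`. -/
theorem sat_iff_pEval (T : CausalModel S) :
    ∀ φ : LPlus S, φ.sat T ↔ φ.pEval (fun g ψ => T.boxSat g ψ)
  | box g ψ => Iff.rfl
  | not φ => by simp only [LPlus.sat, LPlus.pEval, sat_iff_pEval T φ]
  | and φ ψ => by
      simp only [LPlus.sat, LPlus.pEval, sat_iff_pEval T φ, sat_iff_pEval T ψ]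
  | or φ ψ => by
      simp only [LPlus.sat, LPlus.pEval, sat_iff_pEval T φ, sat_iff_pEval T ψ]

end LPlus

/-! ### Basic facts about provability -/

theorem Provable.mono {Γ Γ' : Set (LPlus S)} (h : Γ ⊆ Γ') {φ : LPlus S}
    (hp : Provable Γ φ) : Provable Γ' φ := by
  induction hp with
  | ax hφ => exact Provable.ax (h hφ)
  | mp _ _ ih1 ih2 => exact Provable.mp ih1 ih2

theorem Provable.inLuniq {Γ : Set (LPlus S)} (hΓ : ∀ ψ ∈ Γ, ψ.InLuniq)
    {φ : LPlus S} (hp : Provable Γ φ) : φ.InLuniq := by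
  induction hp with
  | ax hφ => exact hΓ _ hφ
  | mp _ _ ih1 _ => exact ih1.2

/-- A provability helper: tautologies are available if `C0Ax S ⊆ Γ`. -/
theorem prov_taut {Γ : Set (LPlus S)} (hC0 : C0Ax S ⊆ Γ) {φ : LPlus S}
    (ht : φ.Tautology) (hl : φ.InLuniq) : Provable Γ φ :=
  Provable.ax (hC0 ⟨ht, hl⟩)

/-- Derivations from an axiom set use only finitely many axioms. -/
theorem Provable.finite {Γ : Set (LPlus S)} {φ : LPlus S} (hp : Provable Γ φ) :
    ∃ Γ₀ : Set (LPlus S), Γ₀.Finite ∧ Γ₀ ⊆ Γ ∧ Provable Γ₀ φ := by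
  induction hp with
  | @ax ψ hφ => exact ⟨{ψ}, Set.finite_singleton ψ, by simpa using hφ,
      Provable.ax rfl⟩
  | mp _ _ ih1 ih2 =>
      obtain ⟨Γ₁, hf1, hs1, hp1⟩ := ih1
      obtain ⟨Γ₂, hf2, hs2, hp2⟩ := ih2
      exact ⟨Γ₁ ∪ Γ₂, hf1.union hf2, Set.union_subset hs1 hs2,
        (hp1.mono Set.subset_union_left).mp (hp2.mono Set.subset_union_right)⟩

/-- The deduction theorem. -/
theorem deduction {Γ : Set (LPlus S)} (hΓ : ∀ ψ ∈ Γ, ψ.InLuniq)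
    (hC0 : C0Ax S ⊆ Γ) {χ ψ : LPlus S} (hχ : χ.InLuniq)
    (h : Provable (insert χ Γ) ψ) : Provable Γ (χ.imp ψ) := by
  have hins : ∀ ψ ∈ insert χ Γ, LPlus.InLuniq ψ := by
    rintro ψ (rfl | hψ); exacts [hχ, hΓ _ hψ]
  induction h with
  | @ax ψ hφ =>
      rcases hφ with rfl | hφ
      · exact prov_taut hC0 (by intro val; simp [LPlus.imp, LPlus.pEval]; tauto)
          (LPlus.inLuniq_imp hχ hχ)
      · have hψ := hΓ _ hφ
        exact Provable.mp
          (prov_taut hC0 (by intro val; simp [LPlus.imp, LPlus.pEval]; tauto)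
            (LPlus.inLuniq_imp hψ (LPlus.inLuniq_imp hχ hψ))) (Provable.ax hφ)
  | @mp α β h1 h2 ih1 ih2 =>
      have hα : α.InLuniq := h2.inLuniq hins
      have hβ : β.InLuniq := (h1.inLuniq hins).2
      exact Provable.mp (Provable.mp
        (prov_taut hC0 (by intro val; simp [LPlus.imp, LPlus.pEval]; tauto)
          (LPlus.inLuniq_imp (LPlus.inLuniq_imp hχ (LPlus.inLuniq_imp hα hβ))
            (LPlus.inLuniq_imp (LPlus.inLuniq_imp hχ hα)
              (LPlus.inLuniq_imp hχ hβ)))) ih1) ih2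

end Aux
section Lindenbaum

variable {S : Signature}

theorem inLuniq_and {φ ψ : LPlus S} (h : φ.InLuniq) (h' : ψ.InLuniq) :
    (LPlus.and φ ψ).InLuniq := ⟨h, h'⟩
theorem inLuniq_or {φ ψ : LPlus S} (h : φ.InLuniq) (h' : ψ.InLuniq) :
    (LPlus.or φ ψ).InLuniq := ⟨h, h'⟩
theorem inLuniq_not' {φ : LPlus S} (h : φ.InLuniq) : (LPlus.not φ).InLuniq := h

theorem inLuniq_disj {φ : LPlus S} :
    ∀ {l : List (LPlus S)}, φ.InLuniq → (∀ χ ∈ l, χ.InLuniq) → (φ.disj l).InLuniq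
  | [], h, _ => h
  | ψ :: l, h, h' =>
      ⟨h, inLuniq_disj (h' ψ (List.mem_cons_self))
        (fun χ hχ => h' χ (List.mem_cons_of_mem _ hχ))⟩

theorem inLuniq_conj {φ : LPlus S} :
    ∀ {l : List (LPlus S)}, φ.InLuniq → (∀ χ ∈ l, χ.InLuniq) → (φ.conj l).InLuniq
  | [], h, _ => h
  | ψ :: l, h, h' =>
      ⟨h, inLuniq_conj (h' ψ (List.mem_cons_self))
        (fun χ hχ => h' χ (List.mem_cons_of_mem _ hχ))⟩

theorem AffDisjunct.inLuniq {Y Z : S.V} {φ : LPlus S}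
    (h : AffDisjunct S Y Z φ) : φ.InLuniq := by
  obtain ⟨g, y, u, z, z', -, -, -, rfl⟩ := h
  exact ⟨⟨_, _, _, rfl⟩, ⟨_, _, _, rfl⟩⟩

theorem IsAffectsFormula.inLuniq {Y Z : S.V} {φ : LPlus S}
    (h : IsAffectsFormula S Y Z φ) : φ.InLuniq := by
  obtain ⟨-, ψ, l, -, hmem, rfl⟩ := h
  exact inLuniq_disj (AffDisjunct.inLuniq ((hmem ψ).1 (List.mem_cons_self)))
    (fun χ hχ => AffDisjunct.inLuniq ((hmem χ).1 (List.mem_cons_of_mem _ hχ)))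

theorem axrec_inLuniq : ∀ φ ∈ AXrec S, φ.InLuniq := by
  rintro φ ((((h | h) | h) | h) | h)
  · rcases h with (h | h)
    · exact h.2
    · obtain ⟨g, X, u, x, x', -, rfl⟩ := h
      exact ⟨⟨_, _, _, rfl⟩, ⟨_, _, _, rfl⟩⟩
  · obtain ⟨g, X, u, x, l, -, -, rfl⟩ := h
    refine inLuniq_disj ⟨_, _, _, rfl⟩ ?_
    intro χ hχ
    simp only [List.mem_map] at hχ
    obtain ⟨y, -, rfl⟩ := hχ
    exact ⟨_, _, _, rfl⟩
  · obtain ⟨g, W, Y, u, w, y, -, -, -, rfl⟩ := h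
    exact ⟨⟨⟨_, _, _, rfl⟩, ⟨_, _, _, rfl⟩⟩, ⟨_, _, _, rfl⟩⟩
  · obtain ⟨g, X, u, x, -, rfl⟩ := h
    exact ⟨_, _, _, rfl⟩
  · obtain ⟨k, Xs, A, B, hA, hB, rfl⟩ := h
    refine LPlus.inLuniq_imp (inLuniq_conj (hA 0).inLuniq ?_) hB.inLuniq
    intro χ hχ
    have : χ ∈ List.ofFn A := List.mem_of_mem_tail hχ
    rw [List.mem_ofFn] at this
    obtain ⟨i, rfl⟩ := this
    exact (hA i).inLuniq

/-- Consistency of a set of formulas: some `L_uniq` formula is not derivable. -/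
def Consist (Γ : Set (LPlus S)) : Prop := ∃ ψ : LPlus S, ψ.InLuniq ∧ ¬ Provable Γ ψ

theorem not_con_of_both {Γ : Set (LPlus S)} (hC0 : C0Ax S ⊆ Γ)
    (hΓ : ∀ ψ ∈ Γ, ψ.InLuniq) {χ : LPlus S}
    (h1 : Provable Γ χ) (h2 : Provable Γ (LPlus.not χ)) : ¬ Consist Γ := by
  rintro ⟨ψ, hψ, hnp⟩
  have hχ : χ.InLuniq := h1.inLuniq hΓ
  exact hnp (Provable.mp (Provable.mp
    (prov_taut hC0 (by intro val; simp [LPlus.imp, LPlus.pEval]; tauto)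
      (LPlus.inLuniq_imp hχ (LPlus.inLuniq_imp (inLuniq_not' hχ) hψ))) h1) h2)

/-- A maximal consistent set exists above any consistent base. -/
theorem lindenbaum {Γ : Set (LPlus S)} (hbase : AXrec S ⊆ Γ)
    (hΓ : ∀ ψ ∈ Γ, ψ.InLuniq) (hc : Consist Γ) :
    ∃ M : Set (LPlus S), Γ ⊆ M ∧ (∀ ψ ∈ M, LPlus.InLuniq ψ) ∧ Consist M ∧
      ∀ χ : LPlus S, χ.InLuniq → (Provable M χ → χ ∈ M) ∧ (χ ∈ M ∨ LPlus.not χ ∈ M) := by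
  classical
  set P : Set (LPlus S) → Prop :=
    fun Δ => Γ ⊆ Δ ∧ (∀ ψ ∈ Δ, LPlus.InLuniq ψ) ∧ Consist Δ with hP
  have hCh : ∀ c ⊆ {Δ | P Δ}, IsChain (· ⊆ ·) c → ∀ Δ₀ ∈ c,
      P (⋃₀ c) := by
    intro c hc' hchain Δ₀ hΔ₀
    refine ⟨(hc' hΔ₀).1.trans (Set.subset_sUnion_of_mem hΔ₀), ?_, ?_⟩
    · rintro ψ ⟨Δ, hΔ, hψ⟩
      exact (hc' hΔ).2.1 ψ hψ
    · by_contra hncon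
      simp only [Consist, not_exists, not_and, not_not] at hncon
      obtain ⟨ψ₀, hψ₀, -⟩ := (hc' hΔ₀).2.2
      have h1 := hncon ψ₀ hψ₀
      have h2 := hncon (LPlus.not ψ₀) hψ₀
      obtain ⟨Γ₁, hf1, hs1, hp1⟩ := h1.finite
      obtain ⟨Γ₂, hf2, hs2, hp2⟩ := h2.finite
      -- a finite subset of the union of a chain lies in one member
      have key : ∀ (F : Set (LPlus S)), F.Finite → F ⊆ ⋃₀ c →
          ∃ Δ ∈ c, F ⊆ Δ := by
        refine fun F hF => Set.Finite.induction_on (motive := fun F _ => F ⊆ ⋃₀ c → ∃ Δ ∈ c, F ⊆ Δ) F hF ?_ ?_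
        · intro _; exact ⟨Δ₀, hΔ₀, Set.empty_subset _⟩
        · intro a s _ _ ih hsub
          obtain ⟨Δ, hΔ, hsΔ⟩ := ih ((Set.subset_insert a s).trans hsub)
          obtain ⟨Δa, hΔa, haΔ⟩ := hsub (Set.mem_insert a s)
          rcases hchain.total hΔ hΔa with h | h
          · exact ⟨Δa, hΔa, Set.insert_subset haΔ (hsΔ.trans h)⟩
          · exact ⟨Δ, hΔ, Set.insert_subset (h haΔ) hsΔ⟩
      obtain ⟨Δ, hΔ, hsΔ⟩ := key (Γ₁ ∪ Γ₂) (hf1.union hf2)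
        (Set.union_subset hs1 hs2)
      have hup1 : Provable Δ ψ₀ :=
        hp1.mono ((Set.subset_union_left).trans hsΔ)
      have hup2 : Provable Δ (LPlus.not ψ₀) :=
        hp2.mono ((Set.subset_union_right).trans hsΔ)
      exact not_con_of_both (fun x hx => (hc' hΔ).1 (hbase (by
          exact Or.inl (Or.inl (Or.inl (Or.inl (Or.inl hx)))))))
        (hc' hΔ).2.1 hup1 hup2 (hc' hΔ).2.2
  obtain ⟨M, hΓM, hMmax⟩ := zorn_subset_nonempty {Δ | P Δ}
    (fun c hc' hchain hne => ⟨⋃₀ c, hCh c hc' hchain hne.choose hne.choose_spec,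
      fun Δ hΔ => Set.subset_sUnion_of_mem hΔ⟩) Γ ⟨subset_rfl, hΓ, hc⟩
  obtain ⟨hΓM, hMIn, hMcon⟩ := hMmax.prop
  have hC0M : C0Ax S ⊆ M := fun x hx =>
    hΓM (hbase (Or.inl (Or.inl (Or.inl (Or.inl (Or.inl hx))))))
  -- deductive closure
  have hclosed : ∀ χ : LPlus S, χ.InLuniq → Provable M χ → χ ∈ M := by
    intro χ hχ hp
    by_contra hnot
    have hne : M ⊆ insert χ M := Set.subset_insert _ _
    have : ¬ P (insert χ M) := by
      intro hPins
      refine hnot ?_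
      have hmem : χ ∈ insert χ M := Set.mem_insert _ _
      rwa [hMmax.eq_of_ge hPins hne] at hmem
    simp only [hP, Set.mem_setOf_eq] at this
    push_neg at this
    have hcon' := this (hΓM.trans hne) (fun ψ hψ =>
      (Set.mem_insert_iff.1 hψ).elim (fun e => e ▸ hχ) (hMIn ψ))
    simp only [Consist, not_exists, not_and, not_not] at hcon'
    obtain ⟨ψ₀, hψ₀, hnp⟩ := hMcon
    have h1 : Provable (insert χ M) ψ₀ := hcon' ψ₀ hψ₀
    have := deduction hMIn hC0M hχ h1
    exact hnp (Provable.mp this hp)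
  -- completeness of M
  have hcompl : ∀ χ : LPlus S, χ.InLuniq → χ ∈ M ∨ LPlus.not χ ∈ M := by
    intro χ hχ
    by_contra hnot
    push_neg at hnot
    obtain ⟨hn1, hn2⟩ := hnot
    obtain ⟨ψ₀, hψ₀, hnp⟩ := hMcon
    have himp : ∀ δ : LPlus S, δ.InLuniq → δ ∉ M → Provable M (δ.imp ψ₀) := by
      intro δ hδ hδn
      have : ¬ P (insert δ M) := by
        intro hPins
        refine hδn ?_
        have hmem : δ ∈ insert δ M := Set.mem_insert _ _
        rwa [hMmax.eq_of_ge hPins (Set.subset_insert _ _)] at hmem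
      simp only [hP, Set.mem_setOf_eq] at this
      push_neg at this
      have hcon' := this (hΓM.trans (Set.subset_insert _ _))
        (fun ψ hψ =>
        (Set.mem_insert_iff.1 hψ).elim (fun e => e ▸ hδ) (hMIn ψ))
      simp only [Consist, not_exists, not_and, not_not] at hcon'
      exact deduction hMIn hC0M hδ (hcon' ψ₀ hψ₀)
    have h1 := himp χ hχ hn1
    have h2 := himp (LPlus.not χ) hχ hn2
    exact hnp (Provable.mp (Provable.mp
      (prov_taut hC0M (by intro val; simp [LPlus.imp, LPlus.pEval]; tauto)
        (LPlus.inLuniq_imp (LPlus.inLuniq_imp hχ hψ₀)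
          (LPlus.inLuniq_imp (LPlus.inLuniq_imp (inLuniq_not' hχ) hψ₀) hψ₀))) h1) h2)
  exact ⟨M, hΓM, hMIn, hMcon, fun χ hχ => ⟨hclosed χ hχ, hcompl χ hχ⟩⟩

/-- The syntactic truth lemma for a maximal consistent set. -/
theorem truth_lemma {M : Set (LPlus S)} (hC0 : C0Ax S ⊆ M)
    (hMIn : ∀ ψ ∈ M, LPlus.InLuniq ψ) (hMcon : Consist M)
    (hmax : ∀ χ : LPlus S, χ.InLuniq →
      (Provable M χ → χ ∈ M) ∧ (χ ∈ M ∨ LPlus.not χ ∈ M)) :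
    ∀ χ : LPlus S, χ.InLuniq →
      (χ.pEval (fun g ψ => LPlus.box g ψ ∈ M) ↔ χ ∈ M) := by
  have hnotboth : ∀ χ : LPlus S, χ ∈ M → LPlus.not χ ∈ M → False := by
    intro χ h1 h2
    exact not_con_of_both hC0 hMIn (Provable.ax h1) (Provable.ax h2) hMcon
  intro χ hχ
  induction χ with
  | box g ψ => exact Iff.rfl
  | not χ ih =>
      have hχ' : χ.InLuniq := hχ
      simp only [LPlus.pEval, ih hχ']
      constructor
      · intro h
        rcases (hmax χ hχ').2 with h' | h'
        · exact absurd h' h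
        · exact h'
      · intro h h'
        exact hnotboth χ h' h
  | and χ ψ ihχ ihψ =>
      obtain ⟨hχ1, hψ1⟩ := hχ
      simp only [LPlus.pEval, ihχ hχ1, ihψ hψ1]
      constructor
      · rintro ⟨h1, h2⟩
        exact (hmax _ (inLuniq_and hχ1 hψ1)).1 (Provable.mp (Provable.mp
          (prov_taut hC0 (by intro val; simp [LPlus.imp, LPlus.pEval]; tauto)
            (LPlus.inLuniq_imp hχ1 (LPlus.inLuniq_imp hψ1 (inLuniq_and hχ1 hψ1))))
          (Provable.ax h1)) (Provable.ax h2))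
      · intro h
        constructor
        · exact (hmax χ hχ1).1 (Provable.mp
            (prov_taut hC0 (by intro val; simp [LPlus.imp, LPlus.pEval]; tauto)
              (LPlus.inLuniq_imp (inLuniq_and hχ1 hψ1) hχ1)) (Provable.ax h))
        · exact (hmax ψ hψ1).1 (Provable.mp
            (prov_taut hC0 (by intro val; simp [LPlus.imp, LPlus.pEval]; tauto)
              (LPlus.inLuniq_imp (inLuniq_and hχ1 hψ1) hψ1)) (Provable.ax h))
  | or χ ψ ihχ ihψ =>
      obtain ⟨hχ1, hψ1⟩ := hχ
      simp only [LPlus.pEval, ihχ hχ1, ihψ hψ1]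
      constructor
      · rintro (h | h)
        · exact (hmax _ (inLuniq_or hχ1 hψ1)).1 (Provable.mp
            (prov_taut hC0 (by intro val; simp [LPlus.imp, LPlus.pEval]; tauto)
              (LPlus.inLuniq_imp hχ1 (inLuniq_or hχ1 hψ1))) (Provable.ax h))
        · exact (hmax _ (inLuniq_or hχ1 hψ1)).1 (Provable.mp
            (prov_taut hC0 (by intro val; simp [LPlus.imp, LPlus.pEval]; tauto)
              (LPlus.inLuniq_imp hψ1 (inLuniq_or hχ1 hψ1))) (Provable.ax h))
      · intro h
        by_contra hcon
        push_neg at hcon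
        obtain ⟨h1, h2⟩ := hcon
        rcases (hmax χ hχ1).2 with h' | h'
        · exact h1 h'
        rcases (hmax ψ hψ1).2 with h'' | h''
        · exact h2 h''
        have : ψ ∈ M := (hmax ψ hψ1).1 (Provable.mp (Provable.mp
          (prov_taut hC0 (by intro val; simp [LPlus.imp, LPlus.pEval]; tauto)
            (LPlus.inLuniq_imp (inLuniq_or hχ1 hψ1) (LPlus.inLuniq_imp (inLuniq_not' hχ1) hψ1)))
          (Provable.ax h)) (Provable.ax h'))
        exact hnotboth ψ this h''

end Lindenbaum
section Soundness

variable {S : Signature}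

/-- Recursive models have unique solutions. -/
theorem CausalModel.Recursive.uniqueSolutions {T : CausalModel S}
    (h : T.Recursive) : T.UniqueSolutions := by
  obtain ⟨r, hsto, hind⟩ := h
  haveI : IsTrans S.V r := hsto.toIsTrans
  haveI : IsIrrefl S.V r := hsto.toIrrefl
  have wf : WellFounded r := Finite.wellFounded_of_trans_of_irrefl r
  intro g u
  classical
  -- construct a solution by well-founded recursion
  set v : ∀ X : S.V, S.valV X :=
    wf.fix (fun X ih =>
      match g X with
      | some x => x
      | none => T.F X u (fun Q hQ =>
          if h : r Q X then ih Q h else Classical.choice (S.valVNonempty Q)))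
    with hv
  have hfix : ∀ X, v X =
      match g X with
      | some x => x
      | none => T.F X u (fun Q _ =>
          if h : r Q X then v Q else Classical.choice (S.valVNonempty Q)) := by
    intro X
    rw [hv]
    rw [WellFounded.fix_eq]
  have hsol : T.IsSolution g u v := by
    intro X
    constructor
    · intro x hx
      rw [hfix X, hx]
    · intro hx
      rw [hfix X, hx]
      refine hind X u _ _ ?_
      intro Q hQ hnr
      rcases trichotomous (r := r) X Q with h | h | h
      · exact absurd h hnr
      · exact absurd h.symm hQ
      · simp [h]
  refine ⟨v, hsol, ?_⟩
  -- uniqueness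
  intro v' hv'
  funext X
  induction X using wf.induction with
  | _ X ih =>
    rcases hgx : g X with _ | x
    · have h1 := (hv' X).2 hgx
      have h2 := (hsol X).2 hgx
      rw [h1, h2]
      refine hind X u _ _ ?_
      intro Q hQ hnr
      rcases trichotomous (r := r) X Q with h | h | h
      · exact absurd h hnr
      · exact absurd h.symm hQ
      · exact ih Q h
    · rw [(hv' X).1 x hgx, (hsol X).1 x hgx]

/-- In a recursive model, if `Y` affects `Z` (in the semantic sense witnessed by
`boxSat`), then `Y` precedes `Z` in the recursive order. -/
theorem affects_order {T : CausalModel S} {r : S.V → S.V → Prop}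
    (hsto : IsStrictTotalOrder S.V r)
    (hind : ∀ (X : S.V) (u : S.Context) (w w' : ∀ Y : S.V, Y ≠ X → S.valV Y),
      (∀ (Y : S.V) (h : Y ≠ X), ¬ r X Y → w Y h = w' Y h) → T.F X u w = T.F X u w')
    {Y Z : S.V} (hYZ : Y ≠ Z) {g : S.Intervention} {y : S.valV Y}
    {u : S.Context} {z z' : S.valV Z} (hgY : g Y = none) (hgZ : g Z = none)
    (hzz : z ≠ z') (h1 : T.boxSat (intUpdate g Y y) (IForm.atom Z u z'))
    (h2 : T.boxSat g (IForm.atom Z u z)) : r Y Z := by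
  classical
  haveI : IsTrans S.V r := hsto.toIsTrans
  haveI : IsIrrefl S.V r := hsto.toIrrefl
  have wf : WellFounded r := Finite.wellFounded_of_trans_of_irrefl r
  have hrec : T.Recursive := ⟨r, hsto, hind⟩
  obtain ⟨v, hvsol, hvuniq⟩ := hrec.uniqueSolutions g u
  obtain ⟨v', hvsol', hvuniq'⟩ := hrec.uniqueSolutions (intUpdate g Y y) u
  have hvZ : v Z = z := by
    have := h2 (fun _ => v) (by
      intro u' hu'
      rcases hu' with rfl
      exact hvsol)
    exact this
  have hvZ' : v' Z = z' := by
    have := h1 (fun _ => v') (by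
      intro u' hu'
      rcases hu' with rfl
      exact hvsol')
    exact this
  by_contra hnr
  -- then all variables not after Y agree in the two solutions
  have key : ∀ W : S.V, ¬ r Y W → W ≠ Y → v W = v' W := by
    intro W
    induction W using wf.induction with
    | _ W ih =>
      intro hnYW hWY
      have hg' : intUpdate g Y y W = g W := by
        simp [intUpdate, hWY]
      rcases hgw : g W with _ | x
      · have e1 := (hvsol W).2 hgw
        have e2 := (hvsol' W).2 (by rw [hg', hgw])
        rw [e1, e2]
        refine hind W u _ _ ?_
        intro Q hQ hnrWQ
        have hrQW : r Q W := by
          rcases trichotomous (r := r) W Q with h | h | h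
          · exact absurd h hnrWQ
          · exact absurd h.symm hQ
          · exact h
        have hQY : Q ≠ Y := by
          rintro rfl; exact hnYW hrQW
        have hnYQ : ¬ r Y Q := by
          intro h; exact hnYW (hsto.trans _ _ _ h hrQW)
        exact ih Q hrQW hnYQ hQY
      · rw [(hvsol W).1 x hgw, (hvsol' W).1 x (by rw [hg', hgw])]
  have hZY : Z ≠ Y := fun e => hYZ e.symm
  have := key Z (by
    intro h; exact hnr (by
      rcases trichotomous (r := r) Y Z with h' | h' | h'
      · exact h'
      · exact absurd h' hYZ
      · exact absurd h (asymm h'))) hZY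
  rw [hvZ, hvZ'] at this
  exact hzz this

end Soundness
section Soundness2

variable {S : Signature}

/-- Satisfaction of an affects formula means the semantic affects relation. -/
theorem isAffectsFormula_sat {Y Z : S.V} {φ : LPlus S} {T : CausalModel S}
    (h : IsAffectsFormula S Y Z φ) :
    φ.sat T ↔ ∃ χ, AffDisjunct S Y Z χ ∧ χ.sat T := by
  obtain ⟨-, ψ, l, -, hmem, rfl⟩ := h
  rw [LPlus.sat_disj]
  constructor
  · rintro (h | ⟨χ, hχ, h⟩)
    · exact ⟨ψ, (hmem ψ).1 (List.mem_cons_self), h⟩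
    · exact ⟨χ, (hmem χ).1 (List.mem_cons_of_mem _ hχ), h⟩
  · rintro ⟨χ, hχ, h⟩
    rcases List.mem_cons.1 ((hmem χ).2 hχ) with h' | h'
    · exact Or.inl (h' ▸ h)
    · exact Or.inr ⟨χ, h', h⟩

theorem isAffectsFormula_pEval {Y Z : S.V} {φ : LPlus S}
    (val : S.Intervention → IForm S → Prop) (h : IsAffectsFormula S Y Z φ) :
    φ.pEval val ↔ ∃ χ, AffDisjunct S Y Z χ ∧ χ.pEval val := by
  obtain ⟨-, ψ, l, -, hmem, rfl⟩ := h
  rw [LPlus.pEval_disj]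
  constructor
  · rintro (h | ⟨χ, hχ, h⟩)
    · exact ⟨ψ, (hmem ψ).1 (List.mem_cons_self), h⟩
    · exact ⟨χ, (hmem χ).1 (List.mem_cons_of_mem _ hχ), h⟩
  · rintro ⟨χ, hχ, h⟩
    rcases List.mem_cons.1 ((hmem χ).2 hχ) with h' | h'
    · exact Or.inl (h' ▸ h)
    · exact Or.inr ⟨χ, h', h⟩

/-- Soundness of `AX_rec(S)` with respect to recursive models. -/
theorem soundness {φ : LPlus S} (hp : Provable (AXrec S) φ) :
    ∀ T : CausalModel S, T.Recursive → φ.sat T := by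
  induction hp with
  | mp _ _ ih1 ih2 =>
      intro T hT
      rcases ih1 T hT with h | h
      · exact absurd (ih2 T hT) h
      · exact h
  | @ax ψ hψ =>
      intro T hT
      obtain ⟨r, hsto, hind⟩ := hT
      have hUniq : T.UniqueSolutions := CausalModel.Recursive.uniqueSolutions ⟨r, hsto, hind⟩
      rcases hψ with ((((h | h) | h) | h) | h)
      · rcases h with h | h
        · -- C0
          rw [LPlus.sat_iff_pEval]
          exact h.1 _
        · -- C1
          obtain ⟨g, X, u, x, x', hxx, rfl⟩ := h
          obtain ⟨v, hvsol, hvuniq⟩ := hUniq g u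
          rcases Classical.em (T.boxSat g (IForm.atom X u x)) with h1 | h1
          · refine Or.inr ?_
            intro h2
            have e1 : v X = x := h1 (fun _ => v)
              (fun u' hu' => by rcases hu' with rfl; exact hvsol)
            have e2 : v X = x' := h2 (fun _ => v)
              (fun u' hu' => by rcases hu' with rfl; exact hvsol)
            exact hxx (e1 ▸ e2)
          · exact Or.inl h1
      · -- C2
        obtain ⟨g, X, u, x, l, -, hcov, rfl⟩ := h
        obtain ⟨v, hvsol, hvuniq⟩ := hUniq g u
        have hbox : T.boxSat g (IForm.atom X u (v X)) := by
          intro σ hσ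
          have : σ u = v := hvuniq (σ u) (hσ u rfl)
          show σ u X = v X
          rw [this]
        rw [LPlus.sat_disj]
        rcases List.mem_cons.1 (hcov (v X)) with h' | h'
        · exact Or.inl (h' ▸ hbox)
        · exact Or.inr ⟨LPlus.box g (IForm.atom X u (v X)),
            List.mem_map.2 ⟨v X, h', rfl⟩, hbox⟩
      · -- C3
        obtain ⟨g, W, Y, u, w, y, hgW, hgY, hWY, rfl⟩ := h
        rcases Classical.em ((LPlus.and (LPlus.box g (IForm.atom W u w))
            (LPlus.box g (IForm.atom Y u y))).sat T) with h1 | h1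
        · refine Or.inr ?_
          obtain ⟨hbW, hbY⟩ := h1
          obtain ⟨v, hvsol, hvuniq⟩ := hUniq g u
          have hvW : v W = w := hbW (fun _ => v)
            (fun u' hu' => by rcases hu' with rfl; exact hvsol)
          have hvY : v Y = y := hbY (fun _ => v)
            (fun u' hu' => by rcases hu' with rfl; exact hvsol)
          have hvsol' : T.IsSolution (intUpdate g W w) u v := by
            intro X
            constructor
            · intro x hx
              by_cases hXW : X = W
              · subst hXW
                simp [intUpdate] at hx
                rw [hvW, hx]
              · simp [intUpdate, hXW] at hx
                exact (hvsol X).1 x hx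
            · intro hx
              by_cases hXW : X = W
              · subst hXW; simp [intUpdate] at hx
              · simp [intUpdate, hXW] at hx
                exact (hvsol X).2 hx
          obtain ⟨v', hv'sol, hv'uniq⟩ := hUniq (intUpdate g W w) u
          intro σ hσ
          have e1 : σ u = v' := hv'uniq (σ u) (hσ u rfl)
          have e2 : v = v' := hv'uniq v hvsol'
          show σ u Y = y
          rw [e1, ← e2, hvY]
        · exact Or.inl h1
      · -- C4
        obtain ⟨g, X, u, x, hgX, rfl⟩ := h
        intro σ hσ
        exact ((hσ u rfl) X).1 x hgX
      · -- C6
        obtain ⟨k, Xs, A, B, hA, hB, rfl⟩ := h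
        rcases Classical.em (((A 0).conj (List.ofFn A).tail).sat T) with h1 | h1
        · refine Or.inr ?_
          intro hBsat
          rw [LPlus.sat_conj] at h1
          -- each affects formula in the chain holds
          have hchain : ∀ i : Fin (k + 1), r (Xs i.castSucc) (Xs i.succ) := by
            intro i
            have hsatAi : (A i).sat T := by
              rcases Classical.em (i = 0) with rfl | hi0
              · exact h1.1
              · refine h1.2 (A i) ?_
                have : List.ofFn A = A 0 :: List.ofFn (fun j : Fin k => A j.succ) := by
                  rw [List.ofFn_succ]
                rw [this]
                simp only [List.tail_cons, List.mem_ofFn]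
                obtain ⟨n, hn⟩ := i
                have hn0 : n ≠ 0 := fun e => hi0 (by simp [Fin.ext_iff, e])
                obtain ⟨n', rfl⟩ := Nat.exists_eq_succ_of_ne_zero hn0
                exact ⟨⟨n', Nat.lt_of_succ_lt_succ hn⟩, by simp [Fin.ext_iff]⟩
            rw [isAffectsFormula_sat (hA i)] at hsatAi
            obtain ⟨χ, hχ, hsatχ⟩ := hsatAi
            obtain ⟨g, y, u, z, z', hgY, hgZ, hzz, rfl⟩ := hχ
            obtain ⟨hb1, hb2⟩ := hsatχ
            exact affects_order hsto hind (hA i).1 hgY hgZ hzz hb1 hb2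
          have hlast : r (Xs (Fin.last (k + 1))) (Xs 0) := by
            rw [isAffectsFormula_sat hB] at hBsat
            obtain ⟨χ, hχ, hsatχ⟩ := hBsat
            obtain ⟨g, y, u, z, z', hgY, hgZ, hzz, rfl⟩ := hχ
            obtain ⟨hb1, hb2⟩ := hsatχ
            exact affects_order hsto hind hB.1 hgY hgZ hzz hb1 hb2
          -- transitivity along the chain gives a cycle
          haveI : IsTrans S.V r := hsto.toIsTrans
          have htrans : ∀ n (hn : n < k + 2), 0 < n → r (Xs 0) (Xs ⟨n, hn⟩) := by
            intro n
            induction n with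
            | zero => intro _ h; exact absurd h (lt_irrefl 0)
            | succ m ih =>
                intro hn _
                have hedge := hchain ⟨m, Nat.lt_of_succ_lt_succ hn⟩
                have e1 : (Fin.castSucc ⟨m, Nat.lt_of_succ_lt_succ hn⟩ :
                    Fin (k + 2)) = ⟨m, Nat.lt_of_succ_lt hn⟩ := rfl
                have e2 : (Fin.succ ⟨m, Nat.lt_of_succ_lt_succ hn⟩ :
                    Fin (k + 2)) = ⟨m + 1, hn⟩ := rfl
                rw [e1, e2] at hedge
                rcases Nat.eq_zero_or_pos m with rfl | hm
                · exact hedge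
                · exact hsto.trans _ _ _ (ih (Nat.lt_of_succ_lt hn) hm) hedge
          have h0last : r (Xs 0) (Xs (Fin.last (k + 1))) := by
            have := htrans (k + 1) (Nat.lt_succ_self _) (Nat.succ_pos _)
            exact this
          exact (hsto.toIrrefl.irrefl (Xs 0)) (hsto.trans _ _ _ h0last hlast)
        · exact Or.inl h1

end Soundness2
section Canonical

variable {S : Signature} (val : S.Intervention → IForm S → Prop)

/-- From C2: some value is taken. -/
theorem exists_val (hval : ∀ A ∈ AXrec S, A.pEval val)
    (g : S.Intervention) (u : S.Context) (X : S.V) :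
    ∃ x : S.valV X, val g (IForm.atom X u x) := by
  classical
  obtain ⟨x0, l, hl⟩ : ∃ x0 l, (Finset.univ : Finset (S.valV X)).toList = x0 :: l := by
    rcases h : (Finset.univ : Finset (S.valV X)).toList with _ | ⟨a, l⟩
    · exfalso
      have hmem := Finset.mem_univ (Classical.arbitrary (S.valV X))
      rw [← Finset.mem_toList, h] at hmem
      exact List.not_mem_nil hmem
    · exact ⟨a, l, rfl⟩
  have hax : (LPlus.box g (IForm.atom X u x0)).disj
      (l.map fun y => LPlus.box g (IForm.atom X u y)) ∈ AXrec S := by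
    refine Or.inl (Or.inl (Or.inl (Or.inr ?_)))
    refine ⟨g, X, u, x0, l, ?_, ?_, rfl⟩
    · rw [← hl]; exact Finset.nodup_toList _
    · intro y; rw [← hl, Finset.mem_toList]; exact Finset.mem_univ y
  have := hval _ hax
  rw [LPlus.pEval_disj] at this
  rcases this with h | ⟨χ, hχ, h⟩
  · exact ⟨x0, h⟩
  · obtain ⟨y, -, rfl⟩ := List.mem_map.1 hχ
    exact ⟨y, h⟩

/-- From C1: at most one value is taken. -/
theorem val_unique (hval : ∀ A ∈ AXrec S, A.pEval val)
    {g : S.Intervention} {u : S.Context} {X : S.V} {x x' : S.valV X}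
    (h1 : val g (IForm.atom X u x)) (h2 : val g (IForm.atom X u x')) : x = x' := by
  by_contra hne
  have hax : ((LPlus.box g (IForm.atom X u x)).imp
      (LPlus.not (LPlus.box g (IForm.atom X u x')))) ∈ AXrec S :=
    Or.inl (Or.inl (Or.inl (Or.inl (Or.inr ⟨g, X, u, x, x', hne, rfl⟩))))
  have := hval _ hax
  rw [LPlus.pEval_imp] at this
  exact this h1 h2

variable (hval : ∀ A ∈ AXrec S, A.pEval val)

/-- The canonical value function. -/
noncomputable def fv (g : S.Intervention) (u : S.Context) (X : S.V) : S.valV X :=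
  Classical.choose (exists_val val hval g u X)

theorem fv_spec (g : S.Intervention) (u : S.Context) (X : S.V) :
    val g (IForm.atom X u (fv val hval g u X)) :=
  Classical.choose_spec (exists_val val hval g u X)

theorem fv_eq {g : S.Intervention} {u : S.Context} {X : S.V} {x : S.valV X}
    (h : val g (IForm.atom X u x)) : fv val hval g u X = x :=
  val_unique val hval (fv_spec val hval g u X) h

/-- From C4: set variables take their set values. -/
theorem fv_C4 {g : S.Intervention} {u : S.Context} {X : S.V} {x : S.valV X}
    (h : g X = some x) : fv val hval g u X = x := by
  have hax : LPlus.box g (IForm.atom X u x) ∈ AXrec S :=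
    Or.inl (Or.inr ⟨g, X, u, x, h, rfl⟩)
  exact fv_eq val hval (hval _ hax)

theorem intUpdate_self (g : S.Intervention) (W : S.V) (w : S.valV W) :
    intUpdate g W w W = some w := by simp [intUpdate]

theorem intUpdate_other (g : S.Intervention) {W X : S.V} (w : S.valV W)
    (h : X ≠ W) : intUpdate g W w X = g X := by simp [intUpdate, h]

/-- From C3 and C4: setting a variable to its canonical value changes nothing. -/
theorem fv_step {g : S.Intervention} {u : S.Context} {W : S.V}
    (hgW : g W = none) (Z : S.V) :
    fv val hval (intUpdate g W (fv val hval g u W)) u Z = fv val hval g u Z := by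
  by_cases hZW : Z = W
  · subst hZW
    exact fv_C4 val hval (intUpdate_self g Z _)
  · rcases hgZ : g Z with _ | z
    · -- C3
      have hax : ((LPlus.and (LPlus.box g (IForm.atom W u (fv val hval g u W)))
          (LPlus.box g (IForm.atom Z u (fv val hval g u Z)))).imp
            (LPlus.box (intUpdate g W (fv val hval g u W))
              (IForm.atom Z u (fv val hval g u Z)))) ∈ AXrec S := by
        refine Or.inl (Or.inl (Or.inr ?_))
        exact ⟨g, W, Z, u, _, _, hgW, hgZ, fun e => hZW e.symm, rfl⟩
      have := hval _ hax
      rw [LPlus.pEval_imp] at this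
      have h' := this ⟨fv_spec val hval g u W, fv_spec val hval g u Z⟩
      exact fv_eq val hval h'
    · rw [fv_C4 val hval (u := u) hgZ]
      refine fv_C4 val hval ?_
      rw [intUpdate_other g _ hZW, hgZ]

/-- Extending an intervention by canonical values preserves all canonical values. -/
theorem fv_ext {u : S.Context} : ∀ (n : ℕ) (g g' : S.Intervention),
    {Y : S.V | g' Y ≠ g Y}.ncard ≤ n →
    (∀ Y, g' Y = g Y ∨ (g Y = none ∧ g' Y = some (fv val hval g u Y))) →
    ∀ Z, fv val hval g' u Z = fv val hval g u Z := by
  intro n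
  induction n with
  | zero =>
      intro g g' hcard hhyp Z
      have hz : {Y : S.V | g' Y ≠ g Y}.ncard = 0 := Nat.le_zero.1 hcard
      rw [Set.ncard_eq_zero (Set.toFinite _)] at hz
      have : g' = g := by
        funext Y
        by_contra hne
        exact absurd (Set.eq_empty_iff_forall_notMem.1 hz Y) (fun h => h hne)
      rw [this]
  | succ n ih =>
      intro g g' hcard hhyp Z
      by_cases heq : g' = g
      · rw [heq]
      · have : ∃ W, g' W ≠ g W := by
          by_contra hno
          push_neg at hno
          exact heq (funext hno)
        obtain ⟨W, hW⟩ := this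
        rcases hhyp W with h | ⟨hgW, hg'W⟩
        · exact absurd h hW
        set g₁ := intUpdate g W (fv val hval g u W) with hg₁
        have hstep : ∀ Z, fv val hval g₁ u Z = fv val hval g u Z :=
          fv_step val hval hgW
        have hg₁W : g₁ W = some (fv val hval g u W) := intUpdate_self _ _ _
        have hhyp₁ : ∀ Y, g' Y = g₁ Y ∨
            (g₁ Y = none ∧ g' Y = some (fv val hval g₁ u Y)) := by
          intro Y
          by_cases hYW : Y = W
          · subst hYW
            left
            rw [hg'W, hg₁W]
          · rw [hg₁, intUpdate_other g _ hYW, hstep Y]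
            exact hhyp Y
        have hsub : {Y : S.V | g' Y ≠ g₁ Y} ⊆ {Y : S.V | g' Y ≠ g Y} \ {W} := by
          intro Y hY
          have hYW : Y ≠ W := by
            rintro rfl
            exact hY (hg'W.trans hg₁W.symm)
          refine ⟨?_, hYW⟩
          have : g₁ Y = g Y := intUpdate_other g _ hYW
          intro h
          exact hY (by rw [this]; exact h)
        have hcard₁ : {Y : S.V | g' Y ≠ g₁ Y}.ncard ≤ n := by
          have h1 := Set.ncard_le_ncard hsub (Set.toFinite _)
          have h2 : ({Y : S.V | g' Y ≠ g Y} \ {W}).ncard =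
              {Y : S.V | g' Y ≠ g Y}.ncard - 1 :=
            Set.ncard_diff_singleton_of_mem hW
          have h3 : 0 < {Y : S.V | g' Y ≠ g Y}.ncard :=
            (Set.ncard_pos (Set.toFinite _)).2 ⟨W, hW⟩
          omega
        have := ih g₁ g' hcard₁ hhyp₁ Z
        rw [this, hstep]

end Canonical
section CanonModel

variable {S : Signature} (val : S.Intervention → IForm S → Prop)

/-- The full intervention leaving only `X` free. -/
def fullInt (X : S.V) (w : ∀ Y : S.V, Y ≠ X → S.valV Y) : S.Intervention :=
  fun Y => if h : Y = X then none else some (w Y h)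

variable (hval : ∀ A ∈ AXrec S, A.pEval val)

/-- The canonical model determined by a valuation. -/
noncomputable def canonT : CausalModel S :=
  ⟨fun X u w => fv val hval (fullInt X w) u X⟩

/-- Canonical values give solutions in the canonical model. -/
theorem canon_solution (g : S.Intervention) (u : S.Context) :
    (canonT val hval).IsSolution g u (fun X => fv val hval g u X) := by
  intro X
  constructor
  · intro x hx
    exact fv_C4 val hval hx
  · intro hgX
    show fv val hval g u X = fv val hval (fullInt X _) u X
    refine (fv_ext val hval {Y : S.V | fullInt X (fun Y _ => fv val hval g u Y) Y ≠ g Y}.ncard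
      g (fullInt X (fun Y _ => fv val hval g u Y)) le_rfl ?_ X).symm
    intro Y
    by_cases hYX : Y = X
    · subst hYX
      left
      show (if h : Y = Y then none else _) = g Y
      rw [dif_pos rfl, hgX]
    · rcases hgY : g Y with _ | y
      · right
        exact ⟨rfl, by simp [fullInt, hYX]⟩
      · left
        have : fv val hval g u Y = y := fv_C4 val hval hgY
        simp [fullInt, hYX, this, hgY]

/-- The canonical affects relation extracted from the valuation. -/
def affRel (Y Z : S.V) : Prop :=
  Y ≠ Z ∧ ∃ χ, AffDisjunct S Y Z χ ∧ χ.pEval val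

/-- Single-coordinate dependence in the canonical model yields the affects relation. -/
theorem canon_dep {X Y₀ : S.V} (hY₀X : Y₀ ≠ X) {u : S.Context}
    {w w' : ∀ Y : S.V, Y ≠ X → S.valV Y}
    (hagree : ∀ (Y : S.V) (h : Y ≠ X), Y ≠ Y₀ → w Y h = w' Y h)
    (hne : (canonT val hval).F X u w ≠ (canonT val hval).F X u w') :
    affRel val Y₀ X := by
  classical
  set g0 : S.Intervention := fun Z => if Z = Y₀ then none else fullInt X w Z with hg0
  have hg0Y : g0 Y₀ = none := by simp [hg0]
  have hg0X : g0 X = none := by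
    simp only [hg0]
    rw [if_neg (fun h => hY₀X h.symm)]
    simp [fullInt]
  have e1 : fullInt X w = intUpdate g0 Y₀ (w Y₀ hY₀X) := by
    funext Z
    by_cases hZ : Z = Y₀
    · subst hZ
      rw [intUpdate_self]
      simp [fullInt, hY₀X]
    · rw [intUpdate_other _ _ hZ]
      simp [hg0, hZ]
  have e2 : fullInt X w' = intUpdate g0 Y₀ (w' Y₀ hY₀X) := by
    funext Z
    by_cases hZ : Z = Y₀
    · subst hZ
      rw [intUpdate_self]
      simp [fullInt, hY₀X]
    · rw [intUpdate_other _ _ hZ]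
      simp only [hg0, if_neg hZ]
      by_cases hZX : Z = X
      · subst hZX; simp [fullInt]
      · simp [fullInt, hZX, hagree Z hZX hZ]
  have hz1 : val (intUpdate g0 Y₀ (w Y₀ hY₀X))
      (IForm.atom X u ((canonT val hval).F X u w)) := by
    rw [← e1]; exact fv_spec val hval _ u X
  have hz2 : val (intUpdate g0 Y₀ (w' Y₀ hY₀X))
      (IForm.atom X u ((canonT val hval).F X u w')) := by
    rw [← e2]; exact fv_spec val hval _ u X
  have hz : val g0 (IForm.atom X u (fv val hval g0 u X)) := fv_spec val hval g0 u X
  by_cases hcase : fv val hval g0 u X = (canonT val hval).F X u w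
  · refine ⟨hY₀X, _, ⟨g0, w' Y₀ hY₀X, u, fv val hval g0 u X, (canonT val hval).F X u w',
      hg0Y, hg0X, ?_, rfl⟩, hz2, hz⟩
    rw [hcase]; exact hne
  · exact ⟨hY₀X, _, ⟨g0, w Y₀ hY₀X, u, fv val hval g0 u X, (canonT val hval).F X u w,
      hg0Y, hg0X, hcase, rfl⟩, hz1, hz⟩

/-- Affects formulas exist (using `|R(Y)| ≥ 2`). -/
theorem exists_affects_formula (hS : S.Standard) {Y Z : S.V} (hYZ : Y ≠ Z) :
    ∃ φ, IsAffectsFormula S Y Z φ := by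
  classical
  have hfin : {χ : LPlus S | AffDisjunct S Y Z χ}.Finite := by
    have hsub : {χ : LPlus S | AffDisjunct S Y Z χ} ⊆ Set.range
        (fun p : S.Intervention × S.valV Y × S.Context × S.valV Z × S.valV Z =>
          LPlus.and (LPlus.box (intUpdate p.1 Y p.2.1) (IForm.atom Z p.2.2.1 p.2.2.2.2))
            (LPlus.box p.1 (IForm.atom Z p.2.2.1 p.2.2.2.1))) := by
      rintro χ ⟨g, y, u, z, z', h1, h2, h3, rfl⟩
      exact ⟨⟨g, y, u, z, z'⟩, rfl⟩
    exact Set.Finite.subset (Set.finite_range _) hsub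
  obtain ⟨z, z', hzz⟩ := Fintype.exists_pair_of_one_lt_card
    (lt_of_lt_of_le one_lt_two (hS.2 Z))
  have hne : (LPlus.and (LPlus.box (intUpdate S.emptyInt Y (Classical.arbitrary _))
      (IForm.atom Z (fun u => Classical.arbitrary _) z'))
        (LPlus.box S.emptyInt (IForm.atom Z (fun u => Classical.arbitrary _) z))) ∈
      {χ : LPlus S | AffDisjunct S Y Z χ} :=
    ⟨S.emptyInt, Classical.arbitrary _, fun u => Classical.arbitrary _, z, z',
      rfl, rfl, hzz, rfl⟩
  have hmem : ∀ χ, χ ∈ hfin.toFinset.toList ↔ AffDisjunct S Y Z χ := by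
    intro χ
    rw [Finset.mem_toList, Set.Finite.mem_toFinset]
    exact Iff.rfl
  obtain ⟨ψ, l, hl⟩ : ∃ ψ l, hfin.toFinset.toList = ψ :: l := by
    rcases h : hfin.toFinset.toList with _ | ⟨a, l⟩
    · exfalso
      have := (hmem _).2 hne
      rw [h] at this
      exact List.not_mem_nil this
    · exact ⟨a, l, rfl⟩
  refine ⟨ψ.disj l, hYZ, ψ, l, ?_, ?_, rfl⟩
  · rw [← hl]; exact Finset.nodup_toList _
  · intro χ; rw [← hl]; exact hmem χ

/-- From C6: the canonical affects relation has no cycles. -/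
theorem affRel_acyclic (hval : ∀ A ∈ AXrec S, A.pEval val) (hS : S.Standard) :
    ∀ X, ¬ Relation.TransGen (affRel val) X X := by
  classical
  -- convert a transitive step into a finite chain
  have hchain : ∀ {a b : S.V}, Relation.TransGen (affRel val) a b →
      ∃ (m : ℕ) (c : ℕ → S.V), 1 ≤ m ∧ c 0 = a ∧ c m = b ∧
        ∀ i < m, affRel val (c i) (c (i + 1)) := by
    intro a b h
    induction h with
    | single h =>
        exact ⟨1, fun i => if i = 0 then a else _, le_rfl, if_pos rfl, if_neg one_ne_zero,
          fun i hi => by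
            have : i = 0 := Nat.lt_one_iff.1 hi
            subst this
            simpa using h⟩
    | @tail b' c' hab hbc ih =>
        obtain ⟨m, c, hm, hc0, hcm, hedge⟩ := ih
        refine ⟨m + 1, fun i => if i = m + 1 then c' else c i, Nat.le_succ_of_le hm,
          ?_, ?_, ?_⟩
        · have h0 : (0 : ℕ) ≠ m + 1 := by omega
          simp only [if_neg h0]
          exact hc0
        · exact if_pos rfl
        · intro i hi
          rcases Nat.lt_or_ge i m with h' | h'
          · have hne1 : i ≠ m + 1 := by omega
            have hne2 : i + 1 ≠ m + 1 := by omega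
            simp only [if_neg hne1, if_neg hne2]
            exact hedge i h'
          · have : i = m := by omega
            subst this
            have hne1 : i ≠ i + 1 := by omega
            simp only [if_neg hne1, if_pos rfl]
            rw [hcm]
            exact hbc
  intro X hX
  obtain ⟨m, c, hm, hc0, hcm, hedge⟩ := hchain hX
  rcases eq_or_lt_of_le hm with h1 | h2
  · -- a cycle of length 1 contradicts irreflexivity of affRel
    have := hedge 0 (by omega)
    rw [hc0] at this
    have hc1 : c 1 = X := by rw [← h1] at hcm; exact hcm
    rw [hc1] at this
    exact this.1 rfl
  · -- a longer cycle contradicts C6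
    set k := m - 2 with hk
    have hm2 : m = k + 2 := by omega
    have hXs : ∀ i : Fin (k + 2), True := fun _ => trivial
    have hedge' : ∀ i : Fin (k + 1), affRel val (c i.1) (c (i.1 + 1)) := by
      intro i
      exact hedge i.1 (by omega)
    have hlastedge : affRel val (c (k + 1)) (c 0) := by
      have := hedge (k + 1) (by omega)
      rw [show k + 1 + 1 = m by omega, hcm, ← hc0] at this
      exact this
    set A : Fin (k + 1) → LPlus S := fun i =>
      Classical.choose (exists_affects_formula hS (hedge' i).1) with hA
    have hAspec : ∀ i : Fin (k + 1), IsAffectsFormula S (c i.1) (c (i.1 + 1)) (A i) :=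
      fun i => Classical.choose_spec (exists_affects_formula hS (hedge' i).1)
    set B : LPlus S := Classical.choose (exists_affects_formula hS hlastedge.1) with hB
    have hBspec : IsAffectsFormula S (c (k + 1)) (c 0) B :=
      Classical.choose_spec (exists_affects_formula hS hlastedge.1)
    have hax : (((A 0).conj (List.ofFn A).tail).imp (LPlus.not B)) ∈ AXrec S := by
      refine Or.inr ⟨k, fun i : Fin (k + 2) => c i.1, A, B, ?_, ?_, rfl⟩
      · intro i
        exact hAspec i
      · exact hBspec
    have := hval _ hax
    rw [LPlus.pEval_imp] at this
    have hconj : ((A 0).conj (List.ofFn A).tail).pEval val := by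
      rw [LPlus.pEval_conj]
      constructor
      · rw [isAffectsFormula_pEval val (hAspec 0)]
        exact (hedge' 0).2
      · intro χ hχ
        have : χ ∈ List.ofFn A := List.mem_of_mem_tail hχ
        rw [List.mem_ofFn] at this
        obtain ⟨i, rfl⟩ := this
        rw [isAffectsFormula_pEval val (hAspec i)]
        exact (hedge' i).2
    have hnotB := this hconj
    rw [show (LPlus.not B).pEval val = ¬ B.pEval val from rfl] at hnotB
    rw [isAffectsFormula_pEval val hBspec] at hnotB
    exact hnotB hlastedge.2

/-- The affects relation extends to a strict total order. -/
theorem exists_order (hval : ∀ A ∈ AXrec S, A.pEval val) (hS : S.Standard) :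
    ∃ r : S.V → S.V → Prop, IsStrictTotalOrder S.V r ∧
      ∀ Y Z, affRel val Y Z → r Y Z := by
  classical
  set rle : S.V → S.V → Prop :=
    fun a b => Relation.TransGen (affRel val) a b ∨ a = b with hrle
  haveI hpo : IsPartialOrder S.V rle :=
    { refl := fun a => Or.inr rfl
      trans := by
        rintro a b c (hab | rfl) (hbc | rfl)
        · exact Or.inl (hab.trans hbc)
        · exact Or.inl hab
        · exact Or.inl hbc
        · exact Or.inr rfl
      antisymm := by
        rintro a b (hab | rfl) hba
        · rcases hba with hba | rfl
          · exact absurd (hab.trans hba) (affRel_acyclic val hval hS a)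
          · rfl
        · rfl }
  obtain ⟨s, hlin, hsub⟩ := extend_partialOrder rle
  haveI := hlin
  refine ⟨fun a b => s a b ∧ a ≠ b,
    { trichotomous := ?_
      irrefl := fun a h => h.2 rfl
      trans := ?_ }, ?_⟩
  · intro a b
    by_cases hab : a = b
    · exact fun _ _ => hab
    · rcases Std.Total.total (r := s) a b with h | h
      · exact fun h1 _ => absurd ⟨h, hab⟩ h1
      · exact fun _ h2 => absurd ⟨h, fun e => hab e.symm⟩ h2
  · rintro a b c ⟨hab, hab'⟩ ⟨hbc, hbc'⟩
    refine ⟨IsTrans.trans (r := s) a b c hab hbc, ?_⟩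
    rintro rfl
    exact hab' (Std.Antisymm.antisymm (r := s) a b hab hbc)
  · intro Y Z h
    exact ⟨hsub _ _ (Or.inl (Relation.TransGen.single h)), h.1⟩

end CanonModel
section CanonModel2

variable {S : Signature} (val : S.Intervention → IForm S → Prop)
  (hval : ∀ A ∈ AXrec S, A.pEval val)

/-- The canonical model is recursive. -/
theorem canon_recursive (hS : S.Standard) : (canonT val hval).Recursive := by
  classical
  obtain ⟨r, hsto, hr⟩ := exists_order val hval hS
  haveI : IsTrans S.V r := hsto.toIsTrans
  haveI : IsIrrefl S.V r := hsto.toIrrefl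
  refine ⟨r, hsto, ?_⟩
  intro X u w w' hagree
  -- hybrid argument over the number of disagreements
  suffices h : ∀ (n : ℕ) (w w' : ∀ Y : S.V, Y ≠ X → S.valV Y),
      {Y : S.V | ∃ h : Y ≠ X, w Y h ≠ w' Y h}.ncard ≤ n →
      (∀ (Y : S.V) (h : Y ≠ X), ¬ r X Y → w Y h = w' Y h) →
      (canonT val hval).F X u w = (canonT val hval).F X u w' by
    exact h _ w w' le_rfl hagree
  intro n
  induction n with
  | zero =>
      intro w w' hcard hagree
      have hz : {Y : S.V | ∃ h : Y ≠ X, w Y h ≠ w' Y h}.ncard = 0 := Nat.le_zero.1 hcard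
      rw [Set.ncard_eq_zero (Set.toFinite _)] at hz
      have : w = w' := by
        funext Y hY
        by_contra hne
        exact absurd (Set.eq_empty_iff_forall_notMem.1 hz Y) (fun h => h ⟨hY, hne⟩)
      rw [this]
  | succ n ih =>
      intro w w' hcard hagree
      by_cases heq : ∀ (Y : S.V) (h : Y ≠ X), w Y h = w' Y h
      · have : w = w' := by funext Y hY; exact heq Y hY
        rw [this]
      · push_neg at heq
        obtain ⟨Y₀, h₀, hne₀⟩ := heq
        have hrXY₀ : r X Y₀ := by
          by_contra hnr
          exact hne₀ (hagree Y₀ h₀ hnr)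
        set w₁ : ∀ Y : S.V, Y ≠ X → S.valV Y :=
          fun Y h => if Y = Y₀ then w' Y h else w Y h with hw₁
        have hstep : (canonT val hval).F X u w = (canonT val hval).F X u w₁ := by
          by_contra hne
          have haff : affRel val Y₀ X := by
            refine canon_dep val hval h₀ ?_ hne
            intro Y h hYY₀
            simp [hw₁, hYY₀]
          have := hr _ _ haff
          exact (Std.Irrefl.irrefl (r := r) X) (IsTrans.trans _ _ _ hrXY₀ this)
        have hsub : {Y : S.V | ∃ h : Y ≠ X, w₁ Y h ≠ w' Y h} ⊆
            {Y : S.V | ∃ h : Y ≠ X, w Y h ≠ w' Y h} \ {Y₀} := by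
          rintro Y ⟨hY, hne⟩
          have hYY₀ : Y ≠ Y₀ := by
            rintro rfl
            exact hne (by simp [hw₁])
          refine ⟨⟨hY, ?_⟩, hYY₀⟩
          intro h
          exact hne (by simp [hw₁, hYY₀, h])
        have hcard₁ : {Y : S.V | ∃ h : Y ≠ X, w₁ Y h ≠ w' Y h}.ncard ≤ n := by
          have h1 := Set.ncard_le_ncard hsub (Set.toFinite _)
          have h2 : ({Y : S.V | ∃ h : Y ≠ X, w Y h ≠ w' Y h} \ {Y₀}).ncard =
              {Y : S.V | ∃ h : Y ≠ X, w Y h ≠ w' Y h}.ncard - 1 :=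
            Set.ncard_diff_singleton_of_mem ⟨h₀, hne₀⟩
          have h3 : 0 < {Y : S.V | ∃ h : Y ≠ X, w Y h ≠ w' Y h}.ncard :=
            (Set.ncard_pos (Set.toFinite _)).2 ⟨Y₀, h₀, hne₀⟩
          omega
        have hagree₁ : ∀ (Y : S.V) (h : Y ≠ X), ¬ r X Y → w₁ Y h = w' Y h := by
          intro Y h hnr
          by_cases hYY₀ : Y = Y₀
          · simp [hw₁, hYY₀]
          · simp only [hw₁, if_neg hYY₀]
            exact hagree Y h hnr
        rw [hstep]
        exact ih w₁ w' hcard₁ hagree₁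

/-- The canonical model satisfies exactly the right atomic box formulas. -/
theorem canon_boxSat (hS : S.Standard) (g : S.Intervention) (u : S.Context)
    (X : S.V) (x : S.valV X) :
    (canonT val hval).boxSat g (IForm.atom X u x) ↔ val g (IForm.atom X u x) := by
  obtain ⟨v, hvsol, hvuniq⟩ := (canon_recursive val hval hS).uniqueSolutions g u
  have hcan : v = fun X => fv val hval g u X :=
    (hvuniq _ (canon_solution val hval g u)).symm
  constructor
  · intro h
    have := h (fun u' => fun X => fv val hval g u' X)
      (fun u' hu' => by rcases hu' with rfl; exact canon_solution val hval g u')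
    have hx : fv val hval g u X = x := this
    rw [← hx]
    exact fv_spec val hval g u X
  · intro h σ hσ
    have : σ u = v := hvuniq (σ u) (hσ u rfl)
    show σ u X = x
    rw [this, hcan]
    exact fv_eq val hval h

/-- The semantic truth lemma: on `L_uniq(S)`, the canonical model agrees with the
valuation. -/
theorem canon_truth (hS : S.Standard) :
    ∀ χ : LPlus S, χ.InLuniq → (χ.sat (canonT val hval) ↔ χ.pEval val) := by
  intro χ hχ
  induction χ with
  | box g ψ =>
      obtain ⟨X, u, x, rfl⟩ := hχ
      exact canon_boxSat val hval hS g u X x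
  | not χ ih =>
      have := ih hχ
      simp only [LPlus.sat, LPlus.pEval, this]
  | and χ ψ ihχ ihψ =>
      simp only [LPlus.sat, LPlus.pEval, ihχ hχ.1, ihψ hχ.2]
  | or χ ψ ihχ ihψ =>
      simp only [LPlus.sat, LPlus.pEval, ihχ hχ.1, ihψ hχ.2]

end CanonModel2

/-- soundness and completeness. -/
theorem AXrec_sound_and_complete' (S : Signature) (hS : S.Standard)
    (φ : LPlus S) (hφ : φ.InLuniq) :
    Provable (AXrec S) φ ↔ ∀ T : CausalModel S, T.Recursive → φ.sat T := by
  constructor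
  · intro hp T hT
    exact soundness hp T hT
  · intro hsem
    by_contra hnp
    -- the base theory together with ¬φ is consistent
    have hbaseIn : ∀ ψ ∈ AXrec S ∪ {LPlus.not φ}, LPlus.InLuniq ψ := by
      rintro ψ (hψ | hψ)
      · exact axrec_inLuniq ψ hψ
      · rcases hψ with rfl
        exact hφ
    have hC0 : C0Ax S ⊆ AXrec S ∪ {LPlus.not φ} := fun x hx =>
      Or.inl (Or.inl (Or.inl (Or.inl (Or.inl (Or.inl hx)))))
    have hc : Consist (AXrec S ∪ {LPlus.not φ}) := by
      refine ⟨φ, hφ, ?_⟩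
      intro hp
      refine hnp ?_
      have h1 : Provable (insert (LPlus.not φ) (AXrec S)) φ := by
        refine hp.mono ?_
        rintro ψ (hψ | hψ)
        · exact Set.mem_insert_of_mem _ hψ
        · rcases hψ with rfl
          exact Set.mem_insert _ _
      have h2 := deduction (χ := LPlus.not φ) axrec_inLuniq (fun x hx =>
        Or.inl (Or.inl (Or.inl (Or.inl (Or.inl hx))))) hφ h1
      exact Provable.mp (prov_taut (fun x hx =>
        Or.inl (Or.inl (Or.inl (Or.inl (Or.inl hx)))))
        (by intro val; simp [LPlus.imp, LPlus.pEval]; tauto)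
        (LPlus.inLuniq_imp (LPlus.inLuniq_imp (inLuniq_not' hφ) hφ) hφ)) h2
    obtain ⟨M, hsubM, hMIn, hMcon, hmax⟩ := lindenbaum
      (fun x hx => Or.inl hx) hbaseIn hc
    have hC0M : C0Ax S ⊆ M := fun x hx =>
      hsubM (Or.inl (Or.inl (Or.inl (Or.inl (Or.inl (Or.inl hx))))))
    set val : S.Intervention → IForm S → Prop :=
      fun g ψ => LPlus.box g ψ ∈ M with hvaldef
    have htruth := truth_lemma hC0M hMIn hMcon hmax
    have hvalax : ∀ A ∈ AXrec S, A.pEval val := by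
      intro A hA
      exact (htruth A (axrec_inLuniq A hA)).2 (hsubM (Or.inl hA))
    have hnotφ : ¬ φ.pEval val := by
      have hmem : LPlus.not φ ∈ M := hsubM (Or.inr rfl)
      have := (htruth (LPlus.not φ) hφ).2 hmem
      exact this
    have hsat := hsem (canonT val hvalax) (canon_recursive val hvalax hS)
    rw [canon_truth val hvalax hS φ hφ] at hsat
    exact hnotφ hsat

/-- `AX_rec(S)` is sound and complete for `L_uniq(S)` with respect to
`T_rec(S)`: a formula of `L_uniq(S)` is provable in `AX_rec(S)` iff it is true in
every recursive causal model over `S`. -/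
theorem AXrec_sound_and_complete (S : Signature) (hS : S.Standard)
    (φ : LPlus S) (hφ : φ.InLuniq) :
    Provable (AXrec S) φ ↔ ∀ T : CausalModel S, T.Recursive → φ.sat T :=
  AXrec_sound_and_complete' S hS φ hφ
end

section
/- Reduction to the relevant variables fails for arbitrary causal models: let S = (∅, {X, Y, Z}, R) with R(X) = R(Y) = R(Z) = {0, 1}, and let φ be the formula ⟨X←0⟩(Y = 0) ∧ ⟨X←0⟩(Y = 1). Then the causal model T over S with F_X(y, z) = y ⊕ z, F_Y(x, z) = x ⊕ z, and F_Z(x, y) = x ⊕ y (⊕ denoting addition mod 2) satisfies φ, but no causal model over the signature (∅, {X, Y}, R restricted to {X, Y}) satisfies φ. -/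
/-- The signature `S = (∅, {X, Y, Z}, R)` with `R(X) = R(Y) = R(Z) = {0, 1}`; `X, Y, Z`
are the variables `0, 1, 2 : Fin 3`, values are in `Fin 2`. -/
def sig17 : Signature where
  U := Empty
  V := Fin 3
  uFin := inferInstance
  vFin := inferInstance
  vDecEq := inferInstance
  valU := fun u => u.elim
  valV := fun _ => Fin 2
  valUFin := fun u => u.elim
  valVFin := fun _ => inferInstance
  valUNonempty := fun u => u.elim
  valVNonempty := fun _ => ⟨0⟩

theorem succ_ne17 : ∀ i : Fin 3, i + 1 ≠ i := by decide
theorem succ2_ne17 : ∀ i : Fin 3, i + 2 ≠ i := by decide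

/-- The causal model with `F_X(y, z) = y ⊕ z`, `F_Y(x, z) = x ⊕ z`, `F_Z(x, y) = x ⊕ y`
(`⊕` addition mod 2): each variable is the mod-2 sum of the other two. -/
def model17 : CausalModel sig17 where
  F := fun (i : Fin 3) u w =>
    let a : Fin 2 := w (i + 1) (succ_ne17 i)
    let b : Fin 2 := w (i + 2) (succ2_ne17 i)
    a + b

/-- The intervention `X ← 0`. -/
def setX17 : sig17.Intervention :=
  fun (Z : Fin 3) => if Z = (0 : Fin 3) then some (0 : Fin 2) else none

/-- The formula `⟨X←0⟩(Y = 0) ∧ ⟨X←0⟩(Y = 1)` over the three-variable signature. -/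
def phi17 (u : sig17.Context) : LPlus sig17 :=
  LPlus.and (LPlus.dia setX17 (IForm.atom (1 : Fin 3) u (0 : Fin 2)))
            (LPlus.dia setX17 (IForm.atom (1 : Fin 3) u (1 : Fin 2)))

/-- The restricted signature `(∅, {X, Y}, R|_{X,Y})`. -/
def sig17' : Signature where
  U := Empty
  V := Fin 2
  uFin := inferInstance
  vFin := inferInstance
  vDecEq := inferInstance
  valU := fun u => u.elim
  valV := fun _ => Fin 2
  valUFin := fun u => u.elim
  valVFin := fun _ => inferInstance
  valUNonempty := fun u => u.elim
  valVNonempty := fun _ => ⟨0⟩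

/-- The intervention `X ← 0` over the restricted signature. -/
def setX17' : sig17'.Intervention :=
  fun (Z : Fin 2) => if Z = (0 : Fin 2) then some (0 : Fin 2) else none

/-- The formula `⟨X←0⟩(Y = 0) ∧ ⟨X←0⟩(Y = 1)` over the restricted signature. -/
def phi17' (u : sig17'.Context) : LPlus sig17' :=
  LPlus.and (LPlus.dia setX17' (IForm.atom (1 : Fin 2) u (0 : Fin 2)))
            (LPlus.dia setX17' (IForm.atom (1 : Fin 2) u (1 : Fin 2)))

lemma sol17 (u : sig17.Context) (v : Fin 3 → Fin 2) (hX : v 0 = 0)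
    (hY : v 1 = v 2 + v 0) (hZ : v 2 = v 0 + v 1) :
    model17.IsSolution setX17 u v := by
  intro X
  fin_cases X
  · refine ⟨fun x hx => ?_, fun h => by simp [setX17] at h⟩
    simp only [setX17, Fin.ext_iff] at hx
    simp at hx
    exact hX.trans (Option.some.inj hx)
  · refine ⟨fun x hx => ?_, fun _ => ?_⟩
    · simp [setX17, Fin.ext_iff] at hx
    · show v 1 = _
      rw [hY]; rfl
  · refine ⟨fun x hx => ?_, fun _ => ?_⟩
    · simp [setX17, Fin.ext_iff] at hx
    · show v 2 = _
      rw [hZ]; rfl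

/-- reduction to the relevant variables fails for arbitrary causal
models: the mod-2-sum model over `{X, Y, Z}` satisfies `⟨X←0⟩(Y=0) ∧ ⟨X←0⟩(Y=1)`,
but no causal model over `(∅, {X, Y}, R|_{X,Y})` satisfies this formula. -/
theorem reduction_fails_for_arbitrary_models
    (u : sig17.Context) (u' : sig17'.Context) :
    (phi17 u).sat model17 ∧ ∀ T' : CausalModel sig17', ¬ (phi17' u').sat T' := by
  constructor
  · constructor
    · intro h
      have := h (fun _ => (fun _ => (0 : Fin 2))) (fun _ _ => sol17 u _ rfl rfl rfl)
      simp [IForm.eval] at this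
      exact this rfl
    · intro h
      have := h (fun _ => (![0, 1, 1] : Fin 3 → Fin 2)) (fun _ _ => sol17 u _ rfl rfl rfl)
      simp [IForm.eval] at this
      exact this rfl
  · rintro T' ⟨h0, h1⟩
    simp only [LPlus.dia, LPlus.sat, CausalModel.boxSat, not_forall] at h0 h1
    obtain ⟨σ0, hs0, he0⟩ := h0
    obtain ⟨σ1, hs1, he1⟩ := h1
    simp only [IForm.eval, not_not] at he0 he1
    have H0 := hs0 u' rfl
    have H1 := hs1 u' rfl
    have hx0 := (H0 (0 : Fin 2)).1 _ rfl
    have hx1 := (H1 (0 : Fin 2)).1 _ rfl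
    have hy0 := (H0 (1 : Fin 2)).2 rfl
    have hy1 := (H1 (1 : Fin 2)).2 rfl
    have hzero : ∀ W : Fin 2, W ≠ 1 → W = 0 := by decide
    have key : T'.F ((1 : Fin 2) : sig17'.V) u' (fun Y _ => σ0 u' Y)
        = T'.F ((1 : Fin 2) : sig17'.V) u' (fun Y _ => σ1 u' Y) := by
      congr 1
      funext Y h
      have hY := hzero Y h
      subst hY
      rw [hx0, hx1]
    have h01 := he0.symm.trans (hy0.trans (key.trans (hy1.symm.trans he1)))
    exact (by decide : ((0 : Fin 2) = 1 → False)) h01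
end
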